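/- Let I ⊆ ℝ be an interval, let p, q : I → ℝ be strictly positive with p/q strictly increasing on I, and set k(x,y) = p(min(x,y))·q(max(x,y)). For any strictly increasing points x₁ < x₂ < ⋯ < xₙ in I, the matrix K = [k(x_i,x_j)]_{i,j=1}^n is invertible and its inverse is tridiagonal: (K⁻¹)_{ij} = 0 whenever |i − j| ≥ 2. -/

import Mathlib

noncomputable def trid (δ a b : ℕ → ℝ) (I K : ℕ) : ℝ :=
  if I = K then (a (I+1) * b (I-1) - a (I-1) * b (I+1)) / (δ (I-1) * δ I)
  else if K = I + 1 then -1 / δ I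
  else if I = K + 1 then -1 / δ K
  else 0

noncomputable def ker (a b : ℕ → ℝ) (K J : ℕ) : ℝ := a (min K J) * b (max K J)

lemma three_term (n : ℕ) (a b δ : ℕ → ℝ)
    (hδ : ∀ m, δ m = a (m+1) * b m - a m * b (m+1))
    (ha0 : a 0 = 0) (hbn : b (n+1) = 0)
    (hδ0 : ∀ m, m ≤ n → δ m ≠ 0)
    (I J : ℕ) (hI1 : 1 ≤ I) (hIn : I ≤ n) (hJ1 : 1 ≤ J) (hJn : J ≤ n) :
    (∑ m ∈ Finset.range n, trid δ a b I (m+1) * ker a b (m+1) J)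
      = if I = J then 1 else 0 := by
  have hg0 : ker a b 0 J = 0 := by
    simp only [ker]
    rw [min_eq_left (Nat.zero_le _), ha0, zero_mul]
  have hgn : ker a b (n+1) J = 0 := by
    simp only [ker]
    rw [min_eq_right (by omega), max_eq_left (by omega), hbn, mul_zero]
  have step1 : (∑ K ∈ Finset.range (n+1+1), trid δ a b I K * ker a b K J)
      = ∑ m ∈ Finset.range n, trid δ a b I (m+1) * ker a b (m+1) J := by
    rw [Finset.sum_range_succ' (fun K => trid δ a b I K * ker a b K J) (n+1),
        Finset.sum_range_succ]
    simp only [hg0, hgn, mul_zero, add_zero]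
  rw [← step1]
  have hsub : ({I-1, I, I+1} : Finset ℕ) ⊆ Finset.range (n+1+1) := by
    intro K hK
    simp only [Finset.mem_insert, Finset.mem_singleton] at hK
    simp only [Finset.mem_range]
    omega
  have step2 : (∑ K ∈ Finset.range (n+1+1), trid δ a b I K * ker a b K J)
      = ∑ K ∈ ({I-1, I, I+1} : Finset ℕ), trid δ a b I K * ker a b K J := by
    refine (Finset.sum_subset hsub ?_).symm
    intro K _ hK
    simp only [Finset.mem_insert, Finset.mem_singleton] at hK
    push_neg at hK
    obtain ⟨h1, h2, h3⟩ := hK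
    simp only [trid]
    rw [if_neg (by omega), if_neg (by omega), if_neg (by omega), zero_mul]
  rw [step2, Finset.sum_insert (by simp; omega), Finset.sum_insert (by simp),
      Finset.sum_singleton]
  have d1 : δ (I-1) = a I * b (I-1) - a (I-1) * b I := by
    have h := hδ (I-1); rwa [show I-1+1 = I by omega] at h
  have d2 : δ I = a (I+1) * b I - a I * b (I+1) := hδ I
  have hu : δ (I-1) ≠ 0 := hδ0 _ (by omega)
  have hv : δ I ≠ 0 := hδ0 _ hIn
  rw [d1] at hu
  rw [d2] at hv
  have t1 : trid δ a b I (I-1) = -1 / (a I * b (I-1) - a (I-1) * b I) := by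
    simp only [trid]
    rw [if_neg (by omega), if_neg (by omega), if_pos (by omega), d1]
  have t2 : trid δ a b I I = (a (I+1) * b (I-1) - a (I-1) * b (I+1)) /
      ((a I * b (I-1) - a (I-1) * b I) * (a (I+1) * b I - a I * b (I+1))) := by
    simp only [trid]
    rw [if_pos trivial, d1, d2]
  have t3 : trid δ a b I (I+1) = -1 / (a (I+1) * b I - a I * b (I+1)) := by
    simp only [trid]
    rw [if_neg (by omega), if_pos trivial, d2]
  rw [t1, t2, t3]
  simp only [ker]
  have hv' : b I * a (I + 1) - a I * b (I + 1) ≠ 0 := by rw [mul_comm (b I)]; exact hv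
  rcases lt_trichotomy J I with hJI | rfl | hJI
  · rw [if_neg (by omega),
        min_eq_right (show J ≤ I-1 by omega), max_eq_left (show J ≤ I-1 by omega),
        min_eq_right (show J ≤ I by omega), max_eq_left (show J ≤ I by omega),
        min_eq_right (show J ≤ I+1 by omega), max_eq_left (show J ≤ I+1 by omega)]
    field_simp
    ring
  · rw [if_pos rfl,
        min_eq_left (show J-1 ≤ J by omega), max_eq_right (show J-1 ≤ J by omega),
        min_self, max_self,
        min_eq_right (show J ≤ J+1 by omega), max_eq_left (show J ≤ J+1 by omega)]
    field_simp
    ring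
  · rw [if_neg (by omega),
        min_eq_left (show I-1 ≤ J by omega), max_eq_right (show I-1 ≤ J by omega),
        min_eq_left (show I ≤ J by omega), max_eq_right (show I ≤ J by omega),
        min_eq_left (show I+1 ≤ J by omega), max_eq_right (show I+1 ≤ J by omega)]
    field_simp
    ring

/-- For a one-dimensional Markov kernel
`k(x,y) = p(min(x,y)) * q(max(x,y))` on an interval `I ⊆ ℝ` (with `p, q` strictly
positive and `p/q` strictly increasing on `I`), the kernel matrix `K` on any strictly
increasing tuple of points of `I` is invertible and its inverse is tridiagonal:
`(K⁻¹) i j = 0` whenever `|i - j| ≥ 2`. -/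
theorem markov_kernel_matrix_inverse_tridiagonal
    (I : Set ℝ) (hI : I.OrdConnected)
    (p q : ℝ → ℝ)
    (hp : ∀ x ∈ I, 0 < p x) (hq : ∀ x ∈ I, 0 < q x)
    (hpq : StrictMonoOn (fun x => p x / q x) I)
    (n : ℕ) (hn : 1 ≤ n)
    (x : Fin n → ℝ) (hxI : ∀ i, x i ∈ I) (hx : StrictMono x)
    (K : Matrix (Fin n) (Fin n) ℝ)
    (hK : ∀ i j, K i j = p (min (x i) (x j)) * q (max (x i) (x j))) :
    IsUnit K.det ∧ ∀ i j : Fin n, 2 ≤ |(i : ℤ) - (j : ℤ)| → K⁻¹ i j = 0 := by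
  classical
  have val_mk : ∀ (m : ℕ) (h : m < n), ((⟨m, h⟩ : Fin n) : ℕ) = m := fun _ _ => rfl
  obtain ⟨a, haP, ha0, haT⟩ : ∃ a : ℕ → ℝ, (∀ i : Fin n, a ((i : ℕ) + 1) = p (x i)) ∧
      a 0 = 0 ∧ ∀ m, n < m → a m = 1 := by
    refine ⟨fun m => if h : 1 ≤ m ∧ m ≤ n then p (x ⟨m - 1, by omega⟩) else
      if m = 0 then 0 else 1, fun i => ?_, ?_, fun m hm => ?_⟩
    · have hi := i.isLt
      dsimp only
      rw [dif_pos ⟨by omega, by omega⟩]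
      congr 1
    · dsimp only
      rw [dif_neg (by omega), if_pos rfl]
    · dsimp only
      rw [dif_neg (by omega), if_neg (by omega)]
  obtain ⟨b, hbP, hb0, hbT⟩ : ∃ b : ℕ → ℝ, (∀ i : Fin n, b ((i : ℕ) + 1) = q (x i)) ∧
      b 0 = 1 ∧ ∀ m, n < m → b m = 0 := by
    refine ⟨fun m => if h : 1 ≤ m ∧ m ≤ n then q (x ⟨m - 1, by omega⟩) else
      if m = 0 then 1 else 0, fun i => ?_, ?_, fun m hm => ?_⟩
    · have hi := i.isLt
      dsimp only
      rw [dif_pos ⟨by omega, by omega⟩]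
      congr 1
    · dsimp only
      rw [dif_neg (by omega), if_pos rfl]
    · dsimp only
      rw [dif_neg (by omega), if_neg (by omega)]
  set δ : ℕ → ℝ := fun m => a (m + 1) * b m - a m * b (m + 1) with hδdef
  have hδ : ∀ m, δ m = a (m + 1) * b m - a m * b (m + 1) := fun m => rfl
  -- positivity of the δ's
  have hδ0 : ∀ m, m ≤ n → δ m ≠ 0 := by
    intro m hm
    have hpos : 0 < δ m := by
      rw [hδ m]
      rcases Nat.eq_zero_or_pos m with rfl | hm1
      · have h1 : a (0 + 1) = p (x ⟨0, by omega⟩) := haP ⟨0, by omega⟩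
        rw [ha0, hb0, zero_mul, sub_zero, mul_one, h1]
        exact hp _ (hxI _)
      rcases eq_or_lt_of_le hm with rfl | hmn
      · have h1 := hbP ⟨m - 1, by omega⟩
        rw [val_mk] at h1
        rw [show m - 1 + 1 = m by omega] at h1
        rw [haT (m + 1) (by omega), hbT (m + 1) (by omega), mul_zero, sub_zero,
          one_mul, h1]
        exact hq _ (hxI _)
      · have e1 : a (m + 1) = p (x ⟨m, hmn⟩) := by
          have h := haP ⟨m, hmn⟩; rwa [val_mk] at h
        have e2 : b (m + 1) = q (x ⟨m, hmn⟩) := by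
          have h := hbP ⟨m, hmn⟩; rwa [val_mk] at h
        have e3 : a m = p (x ⟨m - 1, by omega⟩) := by
          have h := haP ⟨m - 1, by omega⟩
          rw [val_mk] at h
          rwa [show m - 1 + 1 = m by omega] at h
        have e4 : b m = q (x ⟨m - 1, by omega⟩) := by
          have h := hbP ⟨m - 1, by omega⟩
          rw [val_mk] at h
          rwa [show m - 1 + 1 = m by omega] at h
        rw [e1, e2, e3, e4]
        have hlt : (⟨m - 1, by omega⟩ : Fin n) < ⟨m, hmn⟩ := by
          rw [Fin.lt_def, val_mk, val_mk]; omega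
        have h := hpq (hxI _) (hxI _) (hx hlt)
        simp only at h
        rw [div_lt_div_iff₀ (hq _ (hxI _)) (hq _ (hxI _))] at h
        linarith
    exact hpos.ne'
  -- K in terms of ker
  have hKg : ∀ k l : Fin n, K k l = ker a b ((k : ℕ) + 1) ((l : ℕ) + 1) := by
    intro k l
    rcases le_total k l with h | h
    · have hv : (k : ℕ) ≤ l := h
      rw [hK, min_eq_left (hx.monotone h), max_eq_right (hx.monotone h)]
      simp only [ker]
      rw [min_eq_left (by omega), max_eq_right (by omega), haP k, hbP l]
    · have hv : (l : ℕ) ≤ k := h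
      rw [hK, min_eq_right (hx.monotone h), max_eq_left (hx.monotone h)]
      simp only [ker]
      rw [min_eq_right (by omega), max_eq_left (by omega), haP l, hbP k]
  -- the tridiagonal left inverse
  have hTK : (Matrix.of fun i' j' : Fin n =>
      trid δ a b ((i' : ℕ) + 1) ((j' : ℕ) + 1)) * K = 1 := by
    ext i j
    rw [Matrix.mul_apply, Matrix.one_apply]
    have e1 : ∀ k : Fin n, (Matrix.of fun i' j' : Fin n =>
        trid δ a b ((i' : ℕ) + 1) ((j' : ℕ) + 1)) i k * K k j
        = trid δ a b ((i : ℕ) + 1) ((k : ℕ) + 1) * ker a b ((k : ℕ) + 1) ((j : ℕ) + 1) := by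
      intro k
      rw [Matrix.of_apply, hKg]
    rw [Finset.sum_congr rfl fun k _ => e1 k]
    have hfin : (∑ k : Fin n, trid δ a b ((i : ℕ) + 1) ((k : ℕ) + 1) *
        ker a b ((k : ℕ) + 1) ((j : ℕ) + 1))
        = ∑ m ∈ Finset.range n, trid δ a b ((i : ℕ) + 1) (m + 1) *
          ker a b (m + 1) ((j : ℕ) + 1) :=
      Fin.sum_univ_eq_sum_range
        (fun m => trid δ a b ((i : ℕ) + 1) (m + 1) * ker a b (m + 1) ((j : ℕ) + 1)) n
    rw [hfin, three_term n a b δ hδ ha0 (hbT (n + 1) (by omega)) hδ0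
      ((i : ℕ) + 1) ((j : ℕ) + 1) (by omega) (by have := i.isLt; omega)
      (by omega) (by have := j.isLt; omega)]
    by_cases hij : i = j
    · rw [if_pos (by rw [hij]), if_pos hij]
    · rw [if_neg (fun h => hij (Fin.ext (by omega))), if_neg hij]
  refine ⟨Matrix.isUnit_det_of_left_inverse hTK, ?_⟩
  intro i j hij
  have hij' : (i : ℕ) + 2 ≤ (j : ℕ) ∨ (j : ℕ) + 2 ≤ (i : ℕ) := by
    rcases abs_cases ((i : ℤ) - (j : ℤ)) with ⟨h, _⟩ | ⟨h, _⟩ <;> rw [h] at hij <;>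
      omega
  rw [Matrix.inv_eq_left_inv hTK, Matrix.of_apply]
  simp only [trid]
  rw [if_neg (by omega), if_neg (by omega), if_neg (by omega)]
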